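/- Let (X, r) be a finite involutive non-degenerate set-theoretic solution of the Yang–Baxter equation. Suppose that for some prime divisor p of |𝒢(X,r)|, the group 𝒢(X,r) has an abelian normal Sylow p-subgroup. Then (X, r) is retractable, i.e., there exist distinct x, y ∈ X with σ_x = σ_y. -/

import Mathlib

open Equiv Pointwise

universe u v

/-- An involutive non-degenerate set-theoretic solution of the Yang–Baxter equation on `X`,
presented by its family of bijections `σ x` (`x ∈ X`), subject to the condition
`σ_x ∘ σ_{σ_x⁻¹(y)} = σ_y ∘ σ_{σ_y⁻¹(x)}`; the solution itself is recovered as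
`r (x, y) = (σ x y, (σ (σ x y))⁻¹ x)`. -/
structure YBE (X : Type u) where
  σ : X → Equiv.Perm X
  ybe : ∀ x y : X, σ x * σ ((σ x)⁻¹ y) = σ y * σ ((σ y)⁻¹ x)

namespace YBE

variable {X : Type u} {Y : Type v}

/-- The permutation group `𝒢(X,r)` of a solution. -/
def permGroup (S : YBE X) : Subgroup (Equiv.Perm X) :=
  Subgroup.closure (Set.range S.σ)

/-- `(X,r)` is indecomposable if `𝒢(X,r)` acts transitively on `X`. -/
def Indecomposable (S : YBE X) : Prop :=
  ∀ x y : X, ∃ g ∈ S.permGroup, g x = y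

/-- Homomorphism of solutions. -/
def IsHom (S : YBE X) (T : YBE Y) (f : X → Y) : Prop :=
  ∀ x y : X, f (S.σ x y) = T.σ (f x) (f y)

/-- `T` is (a copy of) the retract `Ret(X,r)` of `S`: there is a surjective homomorphism
of solutions identifying points with equal `σ`'s, and only those. -/
def IsRetract (S : YBE X) (T : YBE Y) : Prop :=
  ∃ f : X → Y, Function.Surjective f ∧ S.IsHom T f ∧
    ∀ x x' : X, f x = f x' ↔ S.σ x = S.σ x'

/-- `Retⁿ(X,r)` has cardinality one, i.e. the multipermutation level is at most `n`. -/
def MPLevelLE : ℕ → (X : Type u) → YBE X → Prop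
  | 0, X, _ => Nonempty X ∧ Subsingleton X
  | n + 1, _, S => ∃ (Z : Type u) (T : YBE Z), S.IsRetract T ∧ MPLevelLE n Z T

/-- `(X,r)` is a multipermutation solution: `Retⁿ(X,r)` has cardinality one
for some positive integer `n`. -/
def IsMultipermutation (S : YBE X) : Prop :=
  ∃ n : ℕ, 0 < n ∧ MPLevelLE n X S

/-- `m` is the multipermutation level of `(X,r)`: it is the least positive integer
with `|Retᵐ(X,r)| = 1`. -/
def MPLevelExact (S : YBE X) (m : ℕ) : Prop :=
  0 < m ∧ MPLevelLE m X S ∧ ∀ k : ℕ, 0 < k → MPLevelLE k X S → m ≤ k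

/-- A simple solution: `|X| > 1` and every epimorphic image is either an isomorphic copy
or a singleton. -/
def IsSimple (S : YBE X) : Prop :=
  1 < Nat.card X ∧ ∀ (Z : Type u) (T : YBE Z) (f : X → Z),
    S.IsHom T f → Function.Surjective f → (Function.Bijective f ∨ Nat.card Z = 1)

end YBE

/-- The orbit `H(x) = {t(x) : t ∈ H}` of `x ∈ X` under a subgroup `H` of a permutation
group `G ≤ Sym(X)`. -/
def orbIn {X : Type u} {G : Subgroup (Equiv.Perm X)} (H : Subgroup ↥G) (x : X) : Set X :=
  {y | ∃ t : ↥G, t ∈ H ∧ (t : Equiv.Perm X) x = y}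

/-- The "orbit" `A(x) = {t(x) : t ∈ A}` of `x ∈ X` under a subset `A` of a permutation
group `G ≤ Sym(X)`. -/
def orbSet {X : Type u} {G : Subgroup (Equiv.Perm X)} (A : Set ↥G) (x : X) : Set X :=
  {y | ∃ t ∈ A, ((t : Equiv.Perm X)) x = y}

/-- A left-brace structure on a group `G`: an abelian group operation `add` (whose neutral
element is `1`) satisfying the brace compatibility `a∘(b+c) + a = a∘b + a∘c`, where `∘` is the
given group operation of `G`.  In other words, this makes `G` a left brace whose
multiplicative group is `G`. -/
structure BraceOps (G : Type*) [Group G] where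
  add : G → G → G
  neg : G → G
  add_assoc : ∀ a b c, add (add a b) c = add a (add b c)
  add_comm : ∀ a b, add a b = add b a
  zero_add : ∀ a, add 1 a = a
  neg_add_cancel : ∀ a, add (neg a) a = 1
  compat : ∀ a b c, add (a * add b c) a = add (a * b) (a * c)

namespace BraceOps

variable {G : Type*} [Group G]

/-- The lambda map `λ_a(b) = -a + a∘b` of a left brace. -/
def lam (β : BraceOps G) (a b : G) : G :=
  β.add (β.neg a) (a * b)

/-- Natural multiples with respect to the additive structure of the brace. -/
def nsmul (β : BraceOps G) : ℕ → G → G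
  | 0, _ => 1
  | n + 1, a => β.add a (β.nsmul n a)

/-- The socle `Soc(B) = {a : a∘b = a + b for all b}` of a left brace. -/
def socle (β : BraceOps G) : Set G :=
  {a | ∀ b : G, a * b = β.add a b}

/-- The Sylow `q`-subgroup (i.e. the `q`-primary component) of the additive group of a
finite left brace. -/
def addSylow (β : BraceOps G) (q : ℕ) : Set G :=
  {a | ∃ k : ℕ, β.nsmul (q ^ k) a = 1}

/-- `A` is a subgroup of the additive group of the brace. -/
def IsAddSubgroup (β : BraceOps G) (A : Set G) : Prop :=
  1 ∈ A ∧ (∀ a ∈ A, ∀ b ∈ A, β.add a b ∈ A) ∧ ∀ a ∈ A, β.neg a ∈ A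

/-- A left ideal of a left brace: an additive subgroup stable under all `λ_a`. -/
def IsLeftIdeal (β : BraceOps G) (L : Set G) : Prop :=
  β.IsAddSubgroup L ∧ ∀ a : G, ∀ b ∈ L, β.lam a b ∈ L

/-- An ideal of a left brace: a normal subgroup of the multiplicative group stable
under all `λ_a`. -/
def IsIdeal (β : BraceOps G) (I : Set G) : Prop :=
  1 ∈ I ∧ (∀ a ∈ I, ∀ b ∈ I, a * b ∈ I) ∧ (∀ a ∈ I, a⁻¹ ∈ I) ∧
    (∀ g : G, ∀ a ∈ I, g * a * g⁻¹ ∈ I) ∧ ∀ g : G, ∀ a ∈ I, β.lam g a ∈ I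

end BraceOps

namespace YBE

variable {X : Type u}

/-- `σ x` as an element of `𝒢(X,r)`. -/
def σg (S : YBE X) (x : X) : ↥S.permGroup :=
  ⟨S.σ x, Subgroup.subset_closure (Set.mem_range_self x)⟩

/-- The natural left-brace structure on `𝒢(X,r)`: the unique left brace structure whose
multiplicative group is `𝒢(X,r)`, whose additive group is generated by `{σ_x : x ∈ X}`,
and whose lambda map satisfies `λ_g(σ_y) = σ_{g(y)}`. -/
structure IsNaturalBrace (S : YBE X) (β : BraceOps ↥S.permGroup) : Prop where
  lam_sigma : ∀ (g : ↥S.permGroup) (y : X),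
    β.lam g (S.σg y) = S.σg ((g : Equiv.Perm X) y)
  add_gen : ∀ A : Set ↥S.permGroup, β.IsAddSubgroup A → (∀ x : X, S.σg x ∈ A) →
    ∀ g : ↥S.permGroup, g ∈ A

/-- The product `P_{τ(1)} P_{τ(2)} ⋯ P_{τ(i)}` of Sylow subgroups of the additive group of
the left brace `𝒢(X,r)`, taken inside the multiplicative group. -/
def sylProdTake (S : YBE X) (β : BraceOps ↥S.permGroup) {n : ℕ} (p : Fin n → ℕ)
    (τ : Equiv.Perm (Fin n)) (i : ℕ) : Set ↥S.permGroup :=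
  ((List.ofFn fun j : Fin n => β.addSylow (p (τ j))).take i).prod

/-- The product `P_{i+1} P_{i+2} ⋯ P_n` of Sylow subgroups of the additive group of the
left brace `𝒢(X,r)`, taken inside the multiplicative group. -/
def sylProdDrop (S : YBE X) (β : BraceOps ↥S.permGroup) {n : ℕ} (p : Fin n → ℕ)
    (i : ℕ) : Set ↥S.permGroup :=
  ((List.ofFn fun j : Fin n => β.addSylow (p j)).drop i).prod

end YBE

/-- The holomorph `ℤ/(q) ⋊ Aut(ℤ/(q))` of the cyclic group of order `q`. -/
abbrev Hol (q : ℕ) :=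
  SemidirectProduct (Multiplicative (ZMod q)) (MulAut (Multiplicative (ZMod q)))
    (MonoidHom.id (MulAut (Multiplicative (ZMod q))))

/-- Kronecker delta `δ_{u,w} ∈ ℤ/(q)`. -/
noncomputable def kdelta (q : ℕ) {α : Type v} (u w : α) : ZMod q :=
  letI := Classical.propDecidable (u = w)
  if u = w then 1 else 0

/-- The map `σ'_{(a,x)}(b,y) = (b + δ_{x,σ_x(y)}, σ_x(y))` on `ℤ/(q) × Y`. -/
noncomputable def extMap {Y : Type v} (T : YBE Y) (q : ℕ) (a b : ZMod q × Y) :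
    ZMod q × Y :=
  (b.1 + kdelta q a.2 (T.σ a.2 b.2), T.σ a.2 b.2)

set_option linter.unusedSectionVars false
set_option linter.unusedVariables false
set_option maxHeartbeats 1000000

namespace S5

variable {X : Type u}

/-- coordinate-permutation action of `Perm X` on integer vectors -/
def pact (f : Equiv.Perm X) (v : X → ℤ) : X → ℤ := fun x => v (f⁻¹ x)

@[simp] lemma pact_one (v : X → ℤ) : pact (1 : Equiv.Perm X) v = v := rfl

lemma pact_mul (f g : Equiv.Perm X) (v : X → ℤ) :
    pact (f * g) v = pact f (pact g v) := by
  funext x; simp [pact, mul_inv_rev]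

@[simp] lemma pact_add (f : Equiv.Perm X) (v w : X → ℤ) :
    pact f (v + w) = pact f v + pact f w := rfl

@[simp] lemma pact_neg (f : Equiv.Perm X) (v : X → ℤ) : pact f (-v) = -(pact f v) := rfl

@[simp] lemma pact_sub (f : Equiv.Perm X) (v w : X → ℤ) :
    pact f (v - w) = pact f v - pact f w := rfl

lemma pact_inv_pact (f : Equiv.Perm X) (v : X → ℤ) : pact f⁻¹ (pact f v) = v := by
  rw [← pact_mul, inv_mul_cancel, pact_one]

lemma pact_pact_inv (f : Equiv.Perm X) (v : X → ℤ) : pact f (pact f⁻¹ v) = v := by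
  rw [← pact_mul, mul_inv_cancel, pact_one]

lemma pact_injective (f : Equiv.Perm X) : Function.Injective (pact f) := by
  intro v w h
  have := congrArg (pact f⁻¹) h
  rwa [pact_inv_pact, pact_inv_pact] at this

lemma pact_nonneg (f : Equiv.Perm X) {v : X → ℤ} (hv : ∀ x, 0 ≤ v x) :
    ∀ x, 0 ≤ pact f v x := fun x => hv _

variable [DecidableEq X]

/-- standard basis vector -/
def ev (y : X) : X → ℤ := fun x => if x = y then 1 else 0

@[simp] lemma ev_self (y : X) : ev y y = 1 := by simp [ev]

lemma ev_ne {x y : X} (h : x ≠ y) : ev y x = 0 := by simp [ev, h]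

lemma pact_ev (f : Equiv.Perm X) (y : X) : pact f (ev y) = ev (f y) := by
  funext x
  simp only [pact, ev]
  by_cases h : x = f y
  · subst h; simp
  · rw [if_neg h, if_neg]
    intro h'
    exact h (by rw [← h']; simp)

/-- semidirect product `ℤ^X ⋊ Perm X` -/
@[ext] structure SD (X : Type u) where
  t : X → ℤ
  l : Equiv.Perm X

instance : Group (SD X) where
  mul a b := ⟨a.t + pact a.l b.t, a.l * b.l⟩
  one := ⟨0, 1⟩
  inv a := ⟨-pact a.l⁻¹ a.t, a.l⁻¹⟩
  mul_assoc a b c := by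
    refine SD.ext ?_ ?_
    · show (a.t + pact a.l b.t) + pact (a.l * b.l) c.t
        = a.t + pact a.l (b.t + pact b.l c.t)
      rw [pact_mul, pact_add, add_assoc]
    · exact mul_assoc _ _ _
  one_mul a := by
    refine SD.ext ?_ ?_
    · show 0 + pact 1 a.t = a.t; simp
    · exact one_mul _
  mul_one a := by
    refine SD.ext ?_ ?_
    · show a.t + pact a.l 0 = a.t
      have : pact a.l (0 : X → ℤ) = 0 := rfl
      rw [this, add_zero]
    · exact mul_one _
  inv_mul_cancel a := by
    refine SD.ext ?_ ?_
    · show -pact a.l⁻¹ a.t + pact a.l⁻¹ a.t = 0; simp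
    · exact inv_mul_cancel _

@[simp] lemma mul_t (a b : SD X) : (a * b).t = a.t + pact a.l b.t := rfl
@[simp] lemma mul_l (a b : SD X) : (a * b).l = a.l * b.l := rfl
@[simp] lemma one_t : (1 : SD X).t = 0 := rfl
@[simp] lemma one_l : (1 : SD X).l = 1 := rfl
@[simp] lemma inv_t (a : SD X) : (a⁻¹).t = -pact a.l⁻¹ a.t := rfl
@[simp] lemma inv_l (a : SD X) : (a⁻¹).l = a.l⁻¹ := rfl

variable (S : YBE X)

/-- the generators of the structure group -/
def Tg (x : X) : SD X := ⟨ev x, S.σ x⟩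

/-- products of generators -/
def pr (L : List X) : SD X := (L.map (Tg S)).prod

@[simp] lemma pr_nil : pr S ([] : List X) = 1 := rfl

@[simp] lemma pr_cons (x : X) (L : List X) : pr S (x :: L) = Tg S x * pr S L := by
  simp [pr]

lemma pr_append (L L' : List X) : pr S (L ++ L') = pr S L * pr S L' := by
  simp [pr]

variable [Fintype X]

/-- total weight of a vector -/
def wt (v : X → ℤ) : ℤ := ∑ x, v x

lemma wt_add (v w : X → ℤ) : wt (v + w) = wt v + wt w := by
  simp [wt, Finset.sum_add_distrib]

lemma wt_sub (v w : X → ℤ) : wt (v - w) = wt v - wt w := by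
  simp [wt, Finset.sum_sub_distrib]

@[simp] lemma wt_zero : wt (0 : X → ℤ) = 0 := by simp [wt]

@[simp] lemma wt_ev (y : X) : wt (ev y) = 1 := by
  simp [wt, ev]

@[simp] lemma wt_pact (f : Equiv.Perm X) (v : X → ℤ) : wt (pact f v) = wt v := by
  simpa [wt, pact] using Equiv.sum_comp f⁻¹ v

lemma pr_t_nonneg (L : List X) : ∀ x, 0 ≤ (pr S L).t x := by
  induction L with
  | nil => intro x; simp
  | cons y L ih =>
      intro x
      simp only [pr_cons, mul_t]
      show 0 ≤ (Tg S y).t x + pact (Tg S y).l (pr S L).t x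
      have h1 : (0:ℤ) ≤ (Tg S y).t x := by
        show (0:ℤ) ≤ ev y x
        by_cases h : x = y
        · subst h; simp
        · rw [ev_ne h]
      exact add_nonneg h1 (pact_nonneg _ ih x)

lemma wt_pr (L : List X) : wt (pr S L).t = L.length := by
  induction L with
  | nil => simp
  | cons y L ih =>
      simp only [pr_cons, mul_t, List.length_cons]
      show wt ((Tg S y).t + pact (Tg S y).l (pr S L).t) = _
      rw [wt_add, wt_pact, ih]
      show wt (ev y) + _ = _
      rw [wt_ev]
      push_cast
      ring

@[simp] lemma Tg_t (x : X) : (Tg S x).t = ev x := rfl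
@[simp] lemma Tg_l (x : X) : (Tg S x).l = S.σ x := rfl

lemma pact_zero (f : Equiv.Perm X) : pact f (0 : X → ℤ) = 0 := rfl

lemma pr_cons_t (x : X) (L : List X) :
    (pr S (x :: L)).t = ev x + pact (S.σ x) (pr S L).t := by
  rw [pr_cons, mul_t, Tg_t, Tg_l]

lemma surj : ∀ (n : ℕ) (v : X → ℤ), (∀ x, 0 ≤ v x) → wt v = (n : ℤ) →
    ∃ L : List X, L.length = n ∧ (pr S L).t = v := by
  intro n
  induction n with
  | zero =>
      intro v hv hw
      have hz : ∀ x ∈ Finset.univ, v x = 0 := by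
        rw [← Finset.sum_eq_zero_iff_of_nonneg (fun x _ => hv x)]
        simpa [wt] using hw
      refine ⟨[], rfl, ?_⟩
      funext x
      simp [hz x (Finset.mem_univ x)]
  | succ n ih =>
      intro v hv hw
      have hex : ∃ x, 0 < v x := by
        by_contra h
        push_neg at h
        have hz : ∀ x, v x = 0 := fun x => le_antisymm (h x) (hv x)
        have : wt v = 0 := by simp [wt, hz]
        rw [hw] at this; omega
      obtain ⟨x, hx⟩ := hex
      set v' := pact (S.σ x)⁻¹ (v - ev x) with hv'
      have hv'nn : ∀ z, 0 ≤ v' z := by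
        apply pact_nonneg
        intro z
        by_cases hz : z = x
        · subst hz; simp only [Pi.sub_apply, ev_self]; omega
        · have h2 : ev x z = 0 := ev_ne hz
          have := hv z
          simp only [Pi.sub_apply, h2]; omega
      have hv'w : wt v' = (n : ℤ) := by
        rw [hv', wt_pact, wt_sub, wt_ev, hw]; push_cast; ring
      obtain ⟨L, hL, hLt⟩ := ih v' hv'nn hv'w
      refine ⟨x :: L, by simp [hL], ?_⟩
      rw [pr_cons, mul_t, hLt, Tg_t, Tg_l, hv', pact_pact_inv]
      abel

lemma inj : ∀ (n : ℕ) (L L' : List X), L.length = n → L'.length = n →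
    (pr S L).t = (pr S L').t → pr S L = pr S L' := by
  intro n
  induction n using Nat.strong_induction_on with
  | _ n ih =>
    intro L L' hL hL' ht
    cases L with
    | nil =>
        have h0 : n = 0 := by simpa using hL.symm
        have : L' = [] := List.length_eq_zero_iff.mp (by rw [hL', h0])
        rw [this]
    | cons x L₁ =>
      cases L' with
      | nil => exfalso; rw [← hL'] at hL; simp at hL
      | cons y L₂ =>
        have hn : L₁.length + 1 = n := by simpa using hL
        have hk2 : L₁.length = L₂.length := by
          rw [← hL'] at hL; simpa using hL
        by_cases hxy : x = y
        · subst hxy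
          have hteq : (pr S L₁).t = (pr S L₂).t := by
            rw [pr_cons, pr_cons, mul_t, mul_t] at ht
            exact pact_injective _ (add_left_cancel ht)
          have := ih L₁.length (by omega) L₁ L₂ rfl hk2.symm hteq
          rw [pr_cons, pr_cons, this]
        · -- main case
          set w := (pr S (x :: L₁)).t with hwdef
          have hw1 : w = ev x + pact (S.σ x) (pr S L₁).t := by
            rw [hwdef, pr_cons, mul_t, Tg_t, Tg_l]
          have hw2 : w = ev y + pact (S.σ y) (pr S L₂).t := by
            rw [ht, pr_cons, mul_t, Tg_t, Tg_l]
          have hwnn : ∀ z, 0 ≤ w z := pr_t_nonneg S _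
          have hwx : 1 ≤ w x := by
            rw [hw1]
            have := pact_nonneg (S.σ x) (pr_t_nonneg S L₁) x
            simp only [Pi.add_apply, ev_self]; omega
          have hwy : 1 ≤ w y := by
            rw [hw2]
            have := pact_nonneg (S.σ y) (pr_t_nonneg S L₂) y
            simp only [Pi.add_apply, ev_self]; omega
          have hkne : L₁.length ≠ 0 := by
            intro h0
            have : L₁ = [] := List.length_eq_zero_iff.mp h0
            subst this
            rw [hw1] at hwy
            simp only [pr_nil, one_t, pact_zero, add_zero] at hwy
            rw [ev_ne (Ne.symm hxy)] at hwy
            omega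
          obtain ⟨k', hk'⟩ : ∃ k', L₁.length = k' + 1 :=
            ⟨L₁.length - 1, by omega⟩
          set u := w - ev x - ev y with hudef
          have hunn : ∀ z, 0 ≤ u z := by
            intro z
            rw [hudef]
            by_cases hzx : z = x
            · subst hzx
              have h1 : ev y z = 0 := ev_ne hxy
              simp only [Pi.sub_apply, ev_self, h1]
              omega
            · by_cases hzy : z = y
              · subst hzy
                have h1 : ev x z = 0 := ev_ne (Ne.symm hxy)
                simp only [Pi.sub_apply, ev_self, h1]
                omega
              · have h1 : ev x z = 0 := ev_ne hzx
                have h2 : ev y z = 0 := ev_ne hzy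
                have := hwnn z
                simp only [Pi.sub_apply, h1, h2]
                omega
          have hwt : wt w = ((L₁.length + 1 : ℕ) : ℤ) := by
            rw [hwdef, wt_pr]; simp
          have hut : wt u = ((k' : ℕ) : ℤ) := by
            rw [hudef, wt_sub, wt_sub, wt_ev, wt_ev, hwt, hk']
            push_cast; ring
          -- predecessors
          obtain ⟨K, hKlen, hKt⟩ := surj S k'
            (pact (S.σ ((S.σ x)⁻¹ y))⁻¹ (pact (S.σ x)⁻¹ u))
            (fun z => pact_nonneg _ (pact_nonneg _ hunn) z)
            (by rw [wt_pact, wt_pact, hut])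
          obtain ⟨K', hK'len, hK't⟩ := surj S k'
            (pact (S.σ ((S.σ y)⁻¹ x))⁻¹ (pact (S.σ y)⁻¹ u))
            (fun z => pact_nonneg _ (pact_nonneg _ hunn) z)
            (by rw [wt_pact, wt_pact, hut])
          have hhead : Tg S x * Tg S ((S.σ x)⁻¹ y) = Tg S y * Tg S ((S.σ y)⁻¹ x) := by
            refine SD.ext ?_ ?_
            · show ev x + pact (S.σ x) (ev ((S.σ x)⁻¹ y))
                = ev y + pact (S.σ y) (ev ((S.σ y)⁻¹ x))
              rw [pact_ev, pact_ev, (show (S.σ x) ((S.σ x)⁻¹ y) = y from Equiv.apply_symm_apply _ _), (show (S.σ y) ((S.σ y)⁻¹ x) = x from Equiv.apply_symm_apply _ _)]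
              abel
            · exact S.ybe x y
          have heq1 : (pr S (x :: (S.σ x)⁻¹ y :: K)).t = w := by
            rw [pr_cons, pr_cons, mul_t, mul_t, Tg_t, Tg_l, Tg_t, Tg_l, hKt,
              pact_add, pact_ev, (show (S.σ x) ((S.σ x)⁻¹ y) = y from Equiv.apply_symm_apply _ _), pact_pact_inv, pact_pact_inv, hudef]
            abel
          have heq2 : (pr S (y :: (S.σ y)⁻¹ x :: K')).t = w := by
            rw [pr_cons, pr_cons, mul_t, mul_t, Tg_t, Tg_l, Tg_t, Tg_l, hK't,
              pact_add, pact_ev, (show (S.σ y) ((S.σ y)⁻¹ x) = x from Equiv.apply_symm_apply _ _), pact_pact_inv, pact_pact_inv, hudef]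
            abel
          -- identify tails
          have htail1 : pr S L₁ = pr S ((S.σ x)⁻¹ y :: K) := by
            apply ih L₁.length (by omega) _ _ rfl (by simp [hKlen, hk'])
            have : ev x + pact (S.σ x) (pr S L₁).t
                = ev x + pact (S.σ x) (pr S ((S.σ x)⁻¹ y :: K)).t := by
              rw [← hw1, ← pr_cons_t, heq1]
            exact pact_injective _ (add_left_cancel this)
          have htail2 : pr S L₂ = pr S ((S.σ y)⁻¹ x :: K') := by
            apply ih L₂.length (by omega) _ _ rfl (by simp [hK'len, hk', ← hk2])
            have : ev y + pact (S.σ y) (pr S L₂).t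
                = ev y + pact (S.σ y) (pr S ((S.σ y)⁻¹ x :: K')).t := by
              rw [← hw2, ← pr_cons_t, heq2]
            exact pact_injective _ (add_left_cancel this)
          -- identify the deep tails
          have hA1 : pr S (x :: (S.σ x)⁻¹ y :: K)
              = (Tg S x * Tg S ((S.σ x)⁻¹ y)) * pr S K := by
            rw [pr_cons, pr_cons, mul_assoc]
          have hA2 : pr S (y :: (S.σ y)⁻¹ x :: K')
              = (Tg S y * Tg S ((S.σ y)⁻¹ x)) * pr S K' := by
            rw [pr_cons, pr_cons, mul_assoc]
          have hKK' : pr S K = pr S K' := by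
            apply ih k' (by omega) _ _ hKlen hK'len
            have e1 : ((Tg S x * Tg S ((S.σ x)⁻¹ y)) * pr S K).t = w := by
              rw [← hA1]; exact heq1
            have e2 : ((Tg S x * Tg S ((S.σ x)⁻¹ y)) * pr S K').t = w := by
              rw [hhead, ← hA2]; exact heq2
            have e3 := e1.trans e2.symm
            rw [mul_t, mul_t] at e3
            exact pact_injective _ (add_left_cancel e3)
          rw [pr_cons, pr_cons, htail1, htail2, pr_cons, pr_cons,
            ← mul_assoc, ← mul_assoc, hhead, hKK']
/-! ### the structure group as a group of fractions -/

def M : Subgroup (SD X) := Subgroup.closure (Set.range (Tg S))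

/-- positive elements -/
def Pos (g : SD X) : Prop := ∃ L : List X, pr S L = g

lemma pos_one : Pos S 1 := ⟨[], rfl⟩

lemma pos_Tg (x : X) : Pos S (Tg S x) := ⟨[x], by simp [pr]⟩

lemma Pos.mul {g h : SD X} (hg : Pos S g) (hh : Pos S h) : Pos S (g * h) := by
  obtain ⟨L, rfl⟩ := hg; obtain ⟨L', rfl⟩ := hh
  exact ⟨L ++ L', pr_append S L L'⟩

lemma pr_mem (L : List X) : pr S L ∈ M S := by
  induction L with
  | nil => exact one_mem _
  | cons x L ih =>
      rw [pr_cons]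
      exact mul_mem (Subgroup.subset_closure ⟨x, rfl⟩) ih

lemma Pos.mem {g : SD X} (hg : Pos S g) : g ∈ M S := by
  obtain ⟨L, rfl⟩ := hg; exact pr_mem S L

lemma Pos.t_nonneg {g : SD X} (hg : Pos S g) : ∀ x, 0 ≤ g.t x := by
  obtain ⟨L, rfl⟩ := hg; exact pr_t_nonneg S L

lemma pos_exists {v : X → ℤ} (hv : ∀ x, 0 ≤ v x) : ∃ g, Pos S g ∧ g.t = v := by
  have hw : 0 ≤ wt v := Finset.sum_nonneg fun x _ => hv x
  obtain ⟨L, _, hLt⟩ := surj S (wt v).toNat v hv (by omega)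
  exact ⟨pr S L, ⟨L, rfl⟩, hLt⟩

lemma pos_t_inj {g h : SD X} (hg : Pos S g) (hh : Pos S h) (ht : g.t = h.t) : g = h := by
  obtain ⟨L, rfl⟩ := hg; obtain ⟨L', rfl⟩ := hh
  have hlen : L.length = L'.length := by
    have := (wt_pr S L).symm.trans ((congrArg wt ht).trans (wt_pr S L'))
    exact_mod_cast this
  exact inj S L.length L L' rfl hlen.symm ht

lemma crm {u v : SD X} (hu : Pos S u) (hv : Pos S v) :
    ∃ p p', Pos S p ∧ Pos S p' ∧ u * p = v * p' := by
  set z : X → ℤ := fun x => max (u.t x) (v.t x) with hz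
  obtain ⟨p, hp, hpt⟩ := pos_exists S (v := pact u.l⁻¹ (z - u.t))
    (pact_nonneg _ fun x => by simp [hz])
  obtain ⟨p', hp', hp't⟩ := pos_exists S (v := pact v.l⁻¹ (z - v.t))
    (pact_nonneg _ fun x => by simp [hz])
  refine ⟨p, p', hp, hp', pos_t_inj S (hu.mul S hp) (hv.mul S hp') ?_⟩
  rw [mul_t, mul_t, hpt, hp't, pact_pact_inv, pact_pact_inv]
  abel

lemma mem_M_iff {g : SD X} : g ∈ M S ↔ ∃ v u, Pos S v ∧ Pos S u ∧ g = v * u⁻¹ := by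
  constructor
  · intro hg
    refine Subgroup.closure_induction ?_ ?_ ?_ ?_ hg
    · rintro _ ⟨x, rfl⟩
      exact ⟨Tg S x, 1, pos_Tg S x, pos_one S, by simp⟩
    · exact ⟨1, 1, pos_one S, pos_one S, by simp⟩
    · rintro a b _ _ ⟨v, u, pv, pu, rfl⟩ ⟨v', u', pv', pu', rfl⟩
      obtain ⟨p, p', pp, pp', hcr⟩ := crm S pu pv'
      have hkey : u⁻¹ * v' = p * p'⁻¹ := by
        have : v' = u * p * p'⁻¹ := by rw [hcr]; group
        rw [this]; group
      refine ⟨v * p, u' * p', pv.mul S pp, pu'.mul S pp', ?_⟩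
      have : v * u⁻¹ * (v' * u'⁻¹) = v * (u⁻¹ * v') * u'⁻¹ := by group
      rw [this, hkey]
      group
    · rintro a _ ⟨v, u, pv, pu, rfl⟩
      exact ⟨u, v, pu, pv, by group⟩
  · rintro ⟨v, u, pv, pu, rfl⟩
    exact mul_mem (pv.mem S) (inv_mem (pu.mem S))

lemma pact_const (f : Equiv.Perm X) (c : ℤ) : pact f (fun _ => c) = fun _ => c := rfl

lemma M_t_inj {g h : SD X} (hg : g ∈ M S) (hh : h ∈ M S) (ht : g.t = h.t) : g = h := by
  obtain ⟨v, u, pv, pu, rfl⟩ := (mem_M_iff S).mp hg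
  obtain ⟨v', u', pv', pu', rfl⟩ := (mem_M_iff S).mp hh
  obtain ⟨p, p', pp, pp', hcr⟩ := crm S pu pu'
  set N₀ := u * p with hN₀
  have posN₀ : Pos S N₀ := pu.mul S pp
  set c : ℤ := wt N₀.t with hc
  have hcb : ∀ x, N₀.t x ≤ c := by
    intro x
    exact Finset.single_le_sum (f := N₀.t) (fun i _ => posN₀.t_nonneg S i) (Finset.mem_univ x)
  obtain ⟨r, hr, hrt⟩ := pos_exists S (v := pact N₀.l⁻¹ ((fun _ => c) - N₀.t))
    (pact_nonneg _ fun x => by simp only [Pi.sub_apply]; have := hcb x; omega)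
  have hNt : (N₀ * r).t = fun _ => c := by
    rw [mul_t, hrt, pact_pact_inv]; abel
  have posN : Pos S (N₀ * r) := posN₀.mul S hr
  have h1 : v * u⁻¹ * (N₀ * r) = v * p * r := by rw [hN₀]; group
  have h2 : v' * u'⁻¹ * (N₀ * r) = v' * p' * r := by rw [hcr]; group
  have key : v * u⁻¹ * (N₀ * r) = v' * u'⁻¹ * (N₀ * r) := by
    apply pos_t_inj S (by rw [h1]; exact (pv.mul S pp).mul S hr)
      (by rw [h2]; exact (pv'.mul S pp').mul S hr)
    have hTl : (v * u⁻¹ * (N₀ * r)).t = (v * u⁻¹).t + pact (v * u⁻¹).l (fun _ => c) := by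
      rw [mul_t, hNt]
    have hTr : (v' * u'⁻¹ * (N₀ * r)).t = (v' * u'⁻¹).t + pact (v' * u'⁻¹).l (fun _ => c) := by
      rw [mul_t, hNt]
    rw [hTl, hTr, ht, pact_const, pact_const]
  exact mul_right_cancel key

lemma M_t_surj (z : X → ℤ) : ∃ g, g ∈ M S ∧ g.t = z := by
  set c : ℤ := ∑ x, |z x| with hc
  have hcb : ∀ x, |z x| ≤ c := fun x =>
    Finset.single_le_sum (f := fun i => |z i|) (fun i _ => abs_nonneg _) (Finset.mem_univ x)
  have hc0 : 0 ≤ c := Finset.sum_nonneg fun i _ => abs_nonneg _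
  obtain ⟨u, hu, hut⟩ := pos_exists S (v := fun _ => c) (fun x => hc0)
  obtain ⟨v, hv, hvt⟩ := pos_exists S (v := (fun _ => c) + pact u.l z)
    (fun x => by
      simp only [Pi.add_apply]
      have h1 := hcb (u.l⁻¹ x)
      have h2 : pact u.l z x = z (u.l⁻¹ x) := rfl
      rw [h2]
      have := abs_le.mp h1
      omega)
  refine ⟨u⁻¹ * v, mul_mem (inv_mem (hu.mem S)) (hv.mem S), ?_⟩
  rw [mul_t, inv_t, inv_l, hvt, hut, pact_add, pact_const, pact_inv_pact]
  abel

/-- canonical representative in the structure group of a vector -/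
noncomputable def rep (z : X → ℤ) : SD X := (M_t_surj S z).choose

lemma rep_mem (z : X → ℤ) : rep S z ∈ M S := (M_t_surj S z).choose_spec.1

lemma rep_t (z : X → ℤ) : (rep S z).t = z := (M_t_surj S z).choose_spec.2

lemma rep_eq {g : SD X} {z : X → ℤ} (hg : g ∈ M S) (ht : g.t = z) : rep S z = g :=
  M_t_inj S (rep_mem S z) hg ((rep_t S z).trans ht.symm)

lemma l_mem {g : SD X} (hg : g ∈ M S) : g.l ∈ S.permGroup := by
  refine Subgroup.closure_induction (p := fun g _ => g.l ∈ S.permGroup) ?_ ?_ ?_ ?_ hg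
  · rintro _ ⟨x, rfl⟩
    exact Subgroup.subset_closure ⟨x, rfl⟩
  · simpa using one_mem S.permGroup
  · intro a b _ _ ha hb
    rw [mul_l]; exact mul_mem ha hb
  · intro a _ ha
    rw [inv_l]; exact inv_mem ha

lemma exists_M_l (gp : Equiv.Perm X) (h : gp ∈ S.permGroup) :
    ∃ m, m ∈ M S ∧ m.l = gp := by
  refine Subgroup.closure_induction (p := fun gp _ => ∃ m, m ∈ M S ∧ m.l = gp) ?_ ?_ ?_ ?_ h
  · rintro _ ⟨x, rfl⟩
    exact ⟨Tg S x, (pos_Tg S x).mem S, rfl⟩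
  · exact ⟨1, one_mem _, rfl⟩
  · rintro a b _ _ ⟨m, hm, rfl⟩ ⟨m', hm', rfl⟩
    exact ⟨m * m', mul_mem hm hm', rfl⟩
  · rintro a _ ⟨m, hm, rfl⟩
    exact ⟨m⁻¹, inv_mem hm, rfl⟩

/-- the cocycle-inverse map onto the permutation group -/
noncomputable def phi (z : X → ℤ) : ↥S.permGroup := ⟨(rep S z).l, l_mem S (rep_mem S z)⟩

lemma phi_coe (z : X → ℤ) : (phi S z : Equiv.Perm X) = (rep S z).l := rfl

/-- translation subgroup -/
def V : AddSubgroup (X → ℤ) where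
  carrier := {v | (⟨v, 1⟩ : SD X) ∈ M S}
  zero_mem' := one_mem (M S)
  add_mem' := by
    intro a b ha hb
    have : (⟨a + b, 1⟩ : SD X) = ⟨a, 1⟩ * ⟨b, 1⟩ := by
      refine SD.ext ?_ ?_
      · show a + b = a + pact 1 b; simp
      · simp
    show (⟨a + b, 1⟩ : SD X) ∈ M S
    rw [this]; exact mul_mem ha hb
  neg_mem' := by
    intro a ha
    have : (⟨-a, 1⟩ : SD X) = (⟨a, 1⟩ : SD X)⁻¹ := by
      refine SD.ext ?_ ?_
      · show -a = -pact (1:Equiv.Perm X)⁻¹ a; simp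
      · simp
    show (⟨-a, 1⟩ : SD X) ∈ M S
    rw [this]; exact inv_mem ha

lemma phi_shift {v : X → ℤ} (hv : v ∈ V S) (z : X → ℤ) : phi S (v + z) = phi S z := by
  have hrep : rep S (v + z) = ⟨v, 1⟩ * rep S z := by
    refine rep_eq S (mul_mem hv (rep_mem S z)) ?_
    rw [mul_t, rep_t]
    show v + pact 1 z = v + z
    simp
  refine Subtype.ext ?_
  rw [phi_coe, phi_coe, hrep, mul_l]
  show 1 * (rep S z).l = _
  rw [one_mul]

lemma phi_diff {z z' : X → ℤ} (h : phi S z = phi S z') : z' - z ∈ V S := by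
  have hl : (rep S z').l = (rep S z).l := by
    have := congrArg Subtype.val h
    rw [phi_coe, phi_coe] at this
    exact this.symm
  have hmem : rep S z' * (rep S z)⁻¹ ∈ M S := mul_mem (rep_mem S z') (inv_mem (rep_mem S z))
  have : (⟨z' - z, 1⟩ : SD X) = rep S z' * (rep S z)⁻¹ := by
    refine SD.ext ?_ ?_
    · show z' - z = (rep S z').t + pact (rep S z').l (-pact (rep S z).l⁻¹ (rep S z).t)
      rw [rep_t, rep_t, hl, pact_neg, pact_pact_inv]
      abel
    · show 1 = (rep S z').l * (rep S z).l⁻¹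
      rw [hl, mul_inv_cancel]
  show (⟨z' - z, 1⟩ : SD X) ∈ M S
  rw [this]; exact hmem

lemma phi_surjective : Function.Surjective (phi S) := by
  intro g
  obtain ⟨m, hm, hml⟩ := exists_M_l S g g.2
  refine ⟨m.t, Subtype.ext ?_⟩
  rw [phi_coe, rep_eq S hm rfl, hml]

lemma phi_mul (z w : X → ℤ) :
    phi S z * phi S w = phi S (z + pact (phi S z : Equiv.Perm X) w) := by
  have hrep : rep S (z + pact (phi S z : Equiv.Perm X) w) = rep S z * rep S w := by
    refine rep_eq S (mul_mem (rep_mem S z) (rep_mem S w)) ?_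
    rw [mul_t, rep_t, rep_t, phi_coe]
  refine Subtype.ext ?_
  show (rep S z).l * (rep S w).l
    = (rep S (z + pact (phi S z : Equiv.Perm X) w)).l
  rw [hrep, mul_l]

lemma phi_ev (x : X) : phi S (ev x) = S.σg x := by
  refine Subtype.ext ?_
  rw [phi_coe, rep_eq S ((pos_Tg S x).mem S) (Tg_t S x)]
  rfl

lemma phi_zero : phi S 0 = 1 := by
  refine Subtype.ext ?_
  rw [phi_coe, rep_eq S (one_mem _) one_t]
  rfl

lemma V_pact (g : ↥S.permGroup) {v : X → ℤ} (hv : v ∈ V S) :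
    pact (g : Equiv.Perm X) v ∈ V S := by
  obtain ⟨m, hm, hml⟩ := exists_M_l S g g.2
  have hmem : m * ⟨v, 1⟩ * m⁻¹ ∈ M S := mul_mem (mul_mem hm hv) (inv_mem hm)
  have heq : (⟨pact (g : Equiv.Perm X) v, 1⟩ : SD X) = m * ⟨v, 1⟩ * m⁻¹ := by
    refine SD.ext ?_ ?_
    · show pact (g : Equiv.Perm X) v
        = (m.t + pact m.l v) + pact (m.l * 1) (-pact m.l⁻¹ m.t)
      rw [mul_one, pact_neg, pact_pact_inv, hml]
      abel
    · show 1 = m.l * 1 * m.l⁻¹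
      rw [mul_one, mul_inv_cancel]
  show (⟨pact (g : Equiv.Perm X) v, 1⟩ : SD X) ∈ M S
  rw [heq]; exact hmem

/-! ### the additive group of the brace -/

abbrev AQ := (X → ℤ) ⧸ V S

def mkq (z : X → ℤ) : AQ S := QuotientAddGroup.mk z

lemma mkq_surjective : Function.Surjective (mkq S) := QuotientAddGroup.mk_surjective

lemma mkq_add (z w : X → ℤ) : mkq S (z + w) = mkq S z + mkq S w := rfl

noncomputable def psi : AQ S → ↥S.permGroup :=
  Quotient.lift (phi S) (by
    intro a b hab
    have h : -a + b ∈ V S := (QuotientAddGroup.leftRel_apply).mp hab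
    have : phi S ((-a + b) + a) = phi S a := phi_shift S h a
    rw [neg_add_cancel_comm] at this
    exact this.symm)

lemma psi_mkq (z : X → ℤ) : psi S (mkq S z) = phi S z := rfl

lemma psi_surjective : Function.Surjective (psi S) := by
  intro g
  obtain ⟨z, hz⟩ := phi_surjective S g
  exact ⟨mkq S z, hz⟩

lemma psi_injective : Function.Injective (psi S) := by
  intro a b hab
  obtain ⟨z, rfl⟩ := mkq_surjective S a
  obtain ⟨w, rfl⟩ := mkq_surjective S b
  rw [psi_mkq, psi_mkq] at hab
  have := phi_diff S hab
  refine (QuotientAddGroup.eq).mpr ?_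
  rwa [neg_add_eq_sub]

/-- pact as an additive homomorphism -/
def pactHom (f : Equiv.Perm X) : (X → ℤ) →+ (X → ℤ) :=
  AddMonoidHom.mk' (pact f) (pact_add f)

/-- the lambda maps of the brace -/
noncomputable def Lact (g : ↥S.permGroup) : AQ S →+ AQ S :=
  QuotientAddGroup.map (V S) (V S) (pactHom (g : Equiv.Perm X))
    (by
      intro v hv
      show pact (g : Equiv.Perm X) v ∈ V S
      exact V_pact S g hv)

lemma Lact_mkq (g : ↥S.permGroup) (z : X → ℤ) :
    Lact S g (mkq S z) = mkq S (pact (g : Equiv.Perm X) z) := rfl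

lemma Lact_one (a : AQ S) : Lact S 1 a = a := by
  obtain ⟨z, rfl⟩ := mkq_surjective S a
  rw [Lact_mkq, OneMemClass.coe_one, pact_one]

lemma Lact_mul (g h : ↥S.permGroup) (a : AQ S) :
    Lact S (g * h) a = Lact S g (Lact S h a) := by
  obtain ⟨z, rfl⟩ := mkq_surjective S a
  rw [Lact_mkq, Lact_mkq, Lact_mkq]
  congr 1

lemma psi_mul (a b : AQ S) :
    psi S a * psi S b = psi S (a + Lact S (psi S a) b) := by
  obtain ⟨z, rfl⟩ := mkq_surjective S a
  obtain ⟨w, rfl⟩ := mkq_surjective S b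
  rw [psi_mkq, psi_mkq, Lact_mkq, ← mkq_add, psi_mkq]
  exact phi_mul S z w

lemma psi_ev (x : X) : psi S (mkq S (ev x)) = S.σg x := phi_ev S x

lemma psi_zero : psi S 0 = 1 := phi_zero S

lemma psi_inv (a : AQ S) : (psi S a)⁻¹ = psi S (-(Lact S ((psi S a)⁻¹) a)) := by
  have key : psi S a * psi S (-(Lact S ((psi S a)⁻¹) a)) = 1 := by
    rw [psi_mul, map_neg, ← Lact_mul, mul_inv_cancel, Lact_one, add_neg_cancel, psi_zero]
  exact (eq_inv_of_mul_eq_one_right key).symm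

instance : Finite (AQ S) := Finite.of_injective (psi S) (psi_injective S)

/-! ### primary components -/

def Aq (q : ℕ) : AddSubgroup (AQ S) where
  carrier := {a | ∃ k : ℕ, q ^ k • a = 0}
  zero_mem' := ⟨0, smul_zero _⟩
  add_mem' := by
    rintro a b ⟨k, hk⟩ ⟨l, hl⟩
    refine ⟨k + l, ?_⟩
    have h1 : q ^ (k + l) • a = 0 := by rw [pow_add, mul_nsmul, hk, smul_zero]
    have h2 : q ^ (k + l) • b = 0 := by rw [pow_add, mul_comm, mul_nsmul, hl, smul_zero]
    rw [nsmul_add, h1, h2, add_zero]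
  neg_mem' := by
    rintro a ⟨k, hk⟩
    exact ⟨k, by rw [neg_nsmul, hk, neg_zero]⟩

def Dq (q : ℕ) : AddSubgroup (AQ S) where
  carrier := {a | ∃ m : ℕ, Nat.Coprime m q ∧ m • a = 0}
  zero_mem' := ⟨1, Nat.coprime_one_left q, smul_zero _⟩
  add_mem' := by
    rintro a b ⟨m, hm, hma⟩ ⟨m', hm', hm'b⟩
    refine ⟨m * m', Nat.Coprime.mul hm hm', ?_⟩
    have h1 : (m * m') • a = 0 := by rw [mul_nsmul, hma, smul_zero]
    have h2 : (m * m') • b = 0 := by rw [mul_comm, mul_nsmul, hm'b, smul_zero]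
    rw [nsmul_add, h1, h2, add_zero]
  neg_mem' := by
    rintro a ⟨m, hm, hma⟩
    exact ⟨m, hm, by rw [neg_nsmul, hma, neg_zero]⟩

lemma Lact_mem_Aq {q : ℕ} (g : ↥S.permGroup) {a : AQ S} (ha : a ∈ Aq S q) :
    Lact S g a ∈ Aq S q := by
  obtain ⟨k, hk⟩ := ha
  exact ⟨k, by rw [← map_nsmul, hk, map_zero]⟩

lemma Lact_mem_Dq {q : ℕ} (g : ↥S.permGroup) {a : AQ S} (ha : a ∈ Dq S q) :
    Lact S g a ∈ Dq S q := by
  obtain ⟨m, hm, hma⟩ := ha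
  exact ⟨m, hm, by rw [← map_nsmul, hma, map_zero]⟩

lemma Aq_inter_Dq {q : ℕ} {a : AQ S} (ha : a ∈ Aq S q) (hd : a ∈ Dq S q) : a = 0 := by
  obtain ⟨k, hk⟩ := ha
  obtain ⟨m, hm, hma⟩ := hd
  have hcop : Nat.Coprime (q ^ k) m := Nat.Coprime.pow_left k hm.symm
  have hbez : (1 : ℤ) = (q ^ k : ℕ) * Nat.gcdA (q ^ k) m + (m : ℕ) * Nat.gcdB (q ^ k) m := by
    have := Nat.gcd_eq_gcd_ab (q ^ k) m
    rwa [hcop] at this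
  have h1 : ((q ^ k : ℕ) * Nat.gcdA (q ^ k) m : ℤ) • a = 0 := by
    rw [mul_comm, mul_zsmul, natCast_zsmul, hk, smul_zero]
  have h2 : ((m : ℕ) * Nat.gcdB (q ^ k) m : ℤ) • a = 0 := by
    rw [mul_comm, mul_zsmul, natCast_zsmul, hma, smul_zero]
  have : a = ((1 : ℤ)) • a := (one_zsmul a).symm
  rw [this, hbez, add_zsmul, h1, h2, add_zero]

lemma decomp (q : ℕ) (hq : q.Prime) (v : AQ S) :
    ∃ u ∈ Aq S q, ∃ w ∈ Dq S q, v = u + w := by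
  set n : ℕ := Nat.card (AQ S) with hn
  have hn0 : n ≠ 0 := Nat.card_pos.ne'
  set k : ℕ := n.factorization q with hk
  set m₀ : ℕ := ordCompl[q] n with hm₀
  have hnfac : q ^ k * m₀ = n := Nat.ordProj_mul_ordCompl_eq_self n q
  have hcop : Nat.Coprime (q ^ k) m₀ :=
    Nat.Coprime.pow_left k (Nat.coprime_ordCompl hq hn0)
  have hbez : (1 : ℤ) = (q ^ k : ℕ) * Nat.gcdA (q ^ k) m₀ + (m₀ : ℕ) * Nat.gcdB (q ^ k) m₀ := by
    have := Nat.gcd_eq_gcd_ab (q ^ k) m₀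
    rwa [hcop] at this
  have hnv : ∀ x : AQ S, (n : ℤ) • x = 0 := by
    intro x
    rw [natCast_zsmul, hn, card_nsmul_eq_zero']
  refine ⟨((m₀ : ℤ) * Nat.gcdB (q ^ k) m₀) • v, ⟨k, ?_⟩,
      ((q ^ k : ℤ) * Nat.gcdA (q ^ k) m₀) • v, ⟨m₀, Nat.coprime_ordCompl hq hn0 |>.symm, ?_⟩, ?_⟩
  · rw [← natCast_zsmul, ← mul_zsmul]
    have heq : ((q ^ k : ℕ) : ℤ) * ((m₀ : ℤ) * Nat.gcdB (q ^ k) m₀)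
        = (n : ℤ) * Nat.gcdB (q ^ k) m₀ := by
      push_cast [← hnfac]; ring
    rw [heq, mul_zsmul, hnv]
  · rw [← natCast_zsmul, ← mul_zsmul]
    have heq : ((m₀ : ℕ) : ℤ) * ((q ^ k : ℤ) * Nat.gcdA (q ^ k) m₀)
        = (n : ℤ) * Nat.gcdA (q ^ k) m₀ := by
      push_cast [← hnfac]; ring
    rw [heq, mul_zsmul, hnv]
  · have h1 : v = ((1 : ℤ)) • v := (one_zsmul v).symm
    nth_rewrite 1 [h1]
    rw [hbez, add_zsmul]
    have e1 : ((q ^ k : ℕ) : ℤ) * Nat.gcdA (q ^ k) m₀ = (q ^ k : ℤ) * Nat.gcdA (q ^ k) m₀ := by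
      push_cast; ring
    have e2 : ((m₀ : ℕ) : ℤ) * Nat.gcdB (q ^ k) m₀ = (m₀ : ℤ) * Nat.gcdB (q ^ k) m₀ := by
      push_cast; ring
    rw [e1, e2, add_comm]

/-- the image of the `q`-primary component in the permutation group -/
def Sq (q : ℕ) : Subgroup ↥S.permGroup where
  carrier := psi S '' (Aq S q)
  one_mem' := ⟨0, zero_mem _, psi_zero S⟩
  mul_mem' := by
    rintro _ _ ⟨a, ha, rfl⟩ ⟨b, hb, rfl⟩
    exact ⟨a + Lact S (psi S a) b,
      add_mem ha (Lact_mem_Aq S _ hb), (psi_mul S a b).symm⟩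
  inv_mem' := by
    rintro _ ⟨a, ha, rfl⟩
    exact ⟨-(Lact S ((psi S a)⁻¹) a), neg_mem (Lact_mem_Aq S _ ha), (psi_inv S a).symm⟩

lemma card_Sq (q : ℕ) : Nat.card (Sq S q) = Nat.card (Aq S q) := by
  show Nat.card ↥(psi S '' (Aq S q)) = _
  rw [Nat.card_image_of_injective (psi_injective S)]
  rfl

/-! ### cardinality of the primary component via Sylow theory -/

lemma card_Aq (q : ℕ) [Fact q.Prime] :
    Nat.card (Aq S q) = q ^ ((Nat.card (AQ S)).factorization q) := by
  set G' := Multiplicative (AQ S)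
  set A' : Subgroup G' := AddSubgroup.toSubgroup (Aq S q) with hA'
  have hA'mem : ∀ x : G', x ∈ A' ↔ Multiplicative.toAdd x ∈ Aq S q := fun x => Iff.rfl
  have hA'p : IsPGroup q A' := by
    intro g
    obtain ⟨k, hk⟩ := (hA'mem g.1).mp g.2
    refine ⟨k, ?_⟩
    refine Subtype.ext ?_
    show (g.1 : G') ^ q ^ k = 1
    apply Multiplicative.toAdd.injective
    rw [toAdd_pow, hk]
    rfl
  obtain ⟨P₂, hle₂⟩ := hA'p.exists_le_sylow
  set P : Sylow q G' := default with hP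
  have hPsub : (P : Subgroup G') ≤ A' := by
    intro x hx
    obtain ⟨k, hk⟩ := P.isPGroup' ⟨x, hx⟩
    rw [hA'mem]
    refine ⟨k, ?_⟩
    have : (x : G') ^ q ^ k = 1 := congrArg Subtype.val hk
    rw [← toAdd_pow, this]
    rfl
  have h1 : Nat.card (P : Subgroup G') ≤ Nat.card A' := Subgroup.card_le_of_le hPsub
  have h2 : Nat.card A' ≤ Nat.card (P₂ : Subgroup G') := Subgroup.card_le_of_le hle₂
  have hPc : Nat.card P = q ^ ((Nat.card G').factorization q) := P.card_eq_multiplicity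
  have hP₂c : Nat.card P₂ = q ^ ((Nat.card G').factorization q) := P₂.card_eq_multiplicity
  have hcardA' : Nat.card A' = q ^ ((Nat.card G').factorization q) := by
    rw [hPc] at h1
    rw [hP₂c] at h2
    omega
  have hcardG' : Nat.card G' = Nat.card (AQ S) := Nat.card_congr Multiplicative.toAdd
  have hAA' : Nat.card (Aq S q) = Nat.card A' :=
    Nat.card_congr (Equiv.subtypeEquiv Multiplicative.ofAdd (fun a => Iff.rfl)).symm
  rw [hAA', hcardA', hcardG']

/-! ### the main argument -/

theorem key (q : ℕ) (hq : q.Prime)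
    (hdvd : q ∣ Nat.card ↥S.permGroup)
    (Q : Sylow q ↥S.permGroup) (hQn : (Q : Subgroup ↥S.permGroup).Normal)
    (hQab : ∀ a b : ↥S.permGroup, a ∈ (Q : Subgroup ↥S.permGroup) →
      b ∈ (Q : Subgroup ↥S.permGroup) → a * b = b * a) :
    ∃ g : ↥S.permGroup, g ≠ 1 ∧ ∀ y : X, S.σ ((g : Equiv.Perm X) y) = S.σ y := by
  haveI : Fact q.Prime := ⟨hq⟩
  have hcardAQ : Nat.card (AQ S) = Nat.card ↥S.permGroup :=
    Nat.card_eq_of_bijective (psi S) ⟨psi_injective S, psi_surjective S⟩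
  have hν1 : 0 < (Nat.card ↥S.permGroup).factorization q :=
    hq.factorization_pos_of_dvd Nat.card_pos.ne' hdvd
  have hAqcard : Nat.card (Aq S q) = q ^ ((Nat.card ↥S.permGroup).factorization q) := by
    rw [card_Aq S q, hcardAQ]
  have hSqcard : Nat.card (Sq S q) = q ^ ((Nat.card ↥S.permGroup).factorization q) :=
    (card_Sq S q).trans hAqcard
  have hSqp : IsPGroup q (Sq S q) := IsPGroup.of_card hSqcard
  obtain ⟨P₂, hle⟩ := hSqp.exists_le_sylow
  have hP₂Q : P₂ = Q := by
    haveI := Sylow.unique_of_normal Q hQn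
    exact Subsingleton.elim _ _
  have hSqleQ : Sq S q ≤ (Q : Subgroup ↥S.permGroup) := hP₂Q ▸ hle
  have hQcard : Nat.card Q = q ^ ((Nat.card ↥S.permGroup).factorization q) :=
    Q.card_eq_multiplicity
  have hsets : (Sq S q : Set ↥S.permGroup) = (Q : Subgroup ↥S.permGroup) := by
    apply Set.eq_of_subset_of_ncard_le hSqleQ
    · rw [← Nat.card_coe_set_eq, ← Nat.card_coe_set_eq]
      have e1 : Nat.card ((Q : Subgroup ↥S.permGroup) : Set ↥S.permGroup) = Nat.card Q := rfl
      have e2 : Nat.card ((Sq S q : Subgroup ↥S.permGroup) : Set ↥S.permGroup)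
          = Nat.card (Sq S q) := rfl
      rw [e1, e2, hQcard, hSqcard]
  have hmemQ : ∀ a ∈ Aq S q, psi S a ∈ (Q : Subgroup ↥S.permGroup) := by
    intro a ha
    have : psi S a ∈ (Sq S q : Set ↥S.permGroup) := ⟨a, ha, rfl⟩
    rw [hsets] at this
    exact this
  have hmemA : ∀ g ∈ (Q : Subgroup ↥S.permGroup), ∃ a ∈ Aq S q, psi S a = g := by
    intro g hg
    have : g ∈ (Sq S q : Set ↥S.permGroup) := by rw [hsets]; exact hg
    obtain ⟨a, ha, hpa⟩ := this
    exact ⟨a, ha, hpa⟩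
  -- the inversion map on the q'-component
  have hDinvmem : ∀ c ∈ Dq S q, (-(Lact S ((psi S c)⁻¹) c)) ∈ Dq S q :=
    fun c hc => neg_mem (Lact_mem_Dq S _ hc)
  have hDinvpsi : ∀ c : AQ S, psi S (-(Lact S ((psi S c)⁻¹) c)) = (psi S c)⁻¹ :=
    fun c => (psi_inv S c).symm
  -- core conjugation computation
  have hcore : ∀ a ∈ Aq S q, ∀ c ∈ Dq S q,
      Lact S (psi S a) (-(Lact S ((psi S c)⁻¹) c)) = -(Lact S ((psi S c)⁻¹) c) := by
    intro a ha c hc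
    set c' := -(Lact S ((psi S c)⁻¹) c) with hc'
    have hc'mem : c' ∈ Dq S q := hDinvmem c hc
    have hpsic' : psi S c' = (psi S c)⁻¹ := hDinvpsi c
    have h1 : psi S c * psi S a = psi S (c + Lact S (psi S c) a) := psi_mul S c a
    have h2 : psi S c * psi S a * (psi S c)⁻¹
        = psi S ((c + Lact S (psi S c) a) + Lact S (psi S c * psi S a) c') := by
      rw [← hpsic', h1, psi_mul]
    have hconjQ : psi S c * psi S a * (psi S c)⁻¹ ∈ (Q : Subgroup ↥S.permGroup) :=
      hQn.conj_mem _ (hmemQ a ha) _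
    obtain ⟨a', ha', hpa'⟩ := hmemA _ hconjQ
    have hE : a' = (c + Lact S (psi S c) a) + Lact S (psi S c) (Lact S (psi S a) c') := by
      apply psi_injective S
      rw [hpa', h2, Lact_mul]
    have hs : c + Lact S (psi S c) (Lact S (psi S a) c') = a' - Lact S (psi S c) a := by
      rw [hE]; abel
    have hsAq : c + Lact S (psi S c) (Lact S (psi S a) c') ∈ Aq S q := by
      rw [hs]
      exact sub_mem ha' (Lact_mem_Aq S _ ha)
    have hsDq : c + Lact S (psi S c) (Lact S (psi S a) c') ∈ Dq S q :=
      add_mem hc (Lact_mem_Dq S _ (Lact_mem_Dq S _ hc'mem))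
    have hs0 : c + Lact S (psi S c) (Lact S (psi S a) c') = 0 := Aq_inter_Dq S hsAq hsDq
    have hneg : Lact S (psi S c) (Lact S (psi S a) c') = -c :=
      eq_neg_of_add_eq_zero_right hs0
    rw [hc'] at hneg
    rw [map_neg, map_neg] at hneg
    have hneg2 : Lact S (psi S c) (Lact S (psi S a) (Lact S ((psi S c)⁻¹) c)) = c :=
      neg_inj.mp hneg
    have hZ := congrArg (Lact S ((psi S c)⁻¹)) hneg2
    rw [← Lact_mul, inv_mul_cancel, Lact_one] at hZ
    rw [hc', map_neg, hZ]
  have hDfix : ∀ a ∈ Aq S q, ∀ w ∈ Dq S q, Lact S (psi S a) w = w := by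
    intro a ha w hw
    -- surjectivity of the inversion map on Dq
    let F : ↥(Dq S q) → ↥(Dq S q) :=
      fun c => ⟨-(Lact S ((psi S c.1)⁻¹) c.1), hDinvmem c.1 c.2⟩
    have hFinj : Function.Injective F := by
      intro c c' hcc'
      have h1 : psi S (F c).1 = (psi S c.1)⁻¹ := hDinvpsi c.1
      have h2 : psi S (F c').1 = (psi S c'.1)⁻¹ := hDinvpsi c'.1
      have : (psi S c.1)⁻¹ = (psi S c'.1)⁻¹ := by
        rw [← h1, ← h2, hcc']
      refine Subtype.ext (psi_injective S (inv_injective this))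
    have hFsurj : Function.Surjective F := Finite.surjective_of_injective hFinj
    obtain ⟨c, hc⟩ := hFsurj ⟨w, hw⟩
    have hw' : w = -(Lact S ((psi S c.1)⁻¹) c.1) := by
      have := congrArg Subtype.val hc
      exact this.symm
    rw [hw']
    exact hcore a ha c.1 c.2
  -- fixed point argument
  letI : MulAction ↥(Sq S q) ↥(Aq S q) :=
    { smul := fun g a => ⟨Lact S (g : ↥S.permGroup) a.1, Lact_mem_Aq S _ a.2⟩
      one_smul := fun a => Subtype.ext (by
        show Lact S ((1 : ↥(Sq S q)) : ↥S.permGroup) a.1 = a.1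
        rw [OneMemClass.coe_one, Lact_one])
      mul_smul := fun g h a => Subtype.ext (by
        show Lact S ((g * h : ↥(Sq S q)) : ↥S.permGroup) a.1 = _
        rw [Subgroup.coe_mul, Lact_mul]
        rfl) }
  have hmod := IsPGroup.card_modEq_card_fixedPoints (G := ↥(Sq S q)) (p := q) hSqp
    (α := ↥(Aq S q))
  have hdvdAq : q ∣ Nat.card ↥(Aq S q) := by
    rw [show Nat.card ↥(Aq S q) = Nat.card (Aq S q) from rfl, hAqcard]
    exact dvd_pow_self q hν1.ne'
  have hdvdfix : q ∣ Nat.card (MulAction.fixedPoints ↥(Sq S q) ↥(Aq S q)) := by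
    have := (Nat.modEq_zero_iff_dvd).mpr hdvdAq
    exact (Nat.modEq_zero_iff_dvd).mp (hmod.symm.trans this)
  have hz0 : (⟨0, zero_mem _⟩ : ↥(Aq S q)) ∈ MulAction.fixedPoints ↥(Sq S q) ↥(Aq S q) := by
    intro g
    refine Subtype.ext ?_
    show Lact S (g : ↥S.permGroup) 0 = 0
    exact map_zero _
  have hfixpos : 0 < Nat.card (MulAction.fixedPoints ↥(Sq S q) ↥(Aq S q)) := by
    haveI : Nonempty ↥(MulAction.fixedPoints ↥(Sq S q) ↥(Aq S q)) := ⟨⟨_, hz0⟩⟩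
    exact Nat.card_pos
  have hfixnontriv : Nontrivial ↥(MulAction.fixedPoints ↥(Sq S q) ↥(Aq S q)) := by
    rw [← Finite.one_lt_card_iff_nontrivial]
    have h1 := hq.two_le
    have h2 := Nat.le_of_dvd hfixpos hdvdfix
    omega
  obtain ⟨f, hfne⟩ := exists_ne (⟨⟨0, zero_mem _⟩, hz0⟩ :
    ↥(MulAction.fixedPoints ↥(Sq S q) ↥(Aq S q)))
  set a₀ : AQ S := f.1.1 with ha₀
  have ha₀Aq : a₀ ∈ Aq S q := f.1.2
  have ha₀ne : a₀ ≠ 0 := by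
    intro h0
    apply hfne
    refine Subtype.ext (Subtype.ext ?_)
    exact h0
  have hfixa₀ : ∀ g : ↥S.permGroup, g ∈ Sq S q → Lact S g a₀ = a₀ := by
    intro g hg
    have := f.2 ⟨g, hg⟩
    exact congrArg (fun z => (Subtype.val z : AQ S)) this
  -- λ_{a₀} is the identity on Aq
  have hAfix : ∀ b ∈ Aq S q, Lact S (psi S a₀) b = b := by
    intro b hb
    have hcomm : psi S a₀ * psi S b = psi S b * psi S a₀ :=
      hQab _ _ (hmemQ _ ha₀Aq) (hmemQ _ hb)
    have h1 : psi S (a₀ + Lact S (psi S a₀) b) = psi S (b + Lact S (psi S b) a₀) := by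
      rw [← psi_mul, ← psi_mul, hcomm]
    have h2 : Lact S (psi S b) a₀ = a₀ := hfixa₀ _ (by
      have : psi S b ∈ (Sq S q : Set ↥S.permGroup) := ⟨b, hb, rfl⟩
      exact this)
    rw [h2] at h1
    have h3 : a₀ + Lact S (psi S a₀) b = b + a₀ := psi_injective S h1
    have h4 : a₀ + Lact S (psi S a₀) b = a₀ + b := by rw [h3, add_comm]
    exact add_left_cancel h4
  -- λ_{a₀} is the identity everywhere
  have hLid : ∀ v : AQ S, Lact S (psi S a₀) v = v := by
    intro v
    obtain ⟨u, hu, w, hw, rfl⟩ := decomp S q hq v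
    rw [map_add, hAfix u hu, hDfix a₀ ha₀Aq w hw]
  refine ⟨psi S a₀, ?_, ?_⟩
  · intro h1
    apply ha₀ne
    apply psi_injective S
    rw [h1, psi_zero]
  · intro y
    have h1 : S.σg (((psi S a₀ : ↥S.permGroup) : Equiv.Perm X) y) = S.σg y := by
      rw [← psi_ev, ← psi_ev]
      congr 1
      have h2 : mkq S (ev (((psi S a₀ : ↥S.permGroup) : Equiv.Perm X) y))
          = Lact S (psi S a₀) (mkq S (ev y)) := by
        rw [Lact_mkq, pact_ev]
      rw [h2, hLid]
    exact congrArg Subtype.val h1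

end S5

theorem statement5' {X : Type u} [Finite X] (S : YBE X) (q : ℕ) (hq : q.Prime)
    (hdvd : q ∣ Nat.card ↥S.permGroup)
    (Q : Sylow q ↥S.permGroup) (hQn : (Q : Subgroup ↥S.permGroup).Normal)
    (hQab : ∀ a b : ↥S.permGroup, a ∈ (Q : Subgroup ↥S.permGroup) →
      b ∈ (Q : Subgroup ↥S.permGroup) → a * b = b * a) :
    ∃ x y : X, x ≠ y ∧ S.σ x = S.σ y := by
  cases nonempty_fintype X
  letI := Classical.decEq X
  obtain ⟨g₀, hg0ne, hg0σ⟩ := S5.key S q hq hdvd Q hQn hQab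
  have hne : (g₀ : Equiv.Perm X) ≠ 1 := by
    intro h
    exact hg0ne (by
      refine Subtype.ext ?_
      rw [h]
      rfl)
  obtain ⟨y, hy⟩ : ∃ y, (g₀ : Equiv.Perm X) y ≠ y := by
    by_contra h
    push_neg at h
    exact hne (Equiv.ext h)
  exact ⟨(g₀ : Equiv.Perm X) y, y, hy, hg0σ y⟩

/-- If for some prime divisor `q` of `|𝒢(X,r)|` the group `𝒢(X,r)` of a
finite solution has an abelian normal Sylow `q`-subgroup, then `(X,r)` is retractable. -/
theorem statement5 {X : Type u} [Finite X] (S : YBE X) (q : ℕ) (hq : q.Prime)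
    (hdvd : q ∣ Nat.card ↥S.permGroup)
    (Q : Sylow q ↥S.permGroup) (hQn : (Q : Subgroup ↥S.permGroup).Normal)
    (hQab : ∀ a b : ↥S.permGroup, a ∈ (Q : Subgroup ↥S.permGroup) →
      b ∈ (Q : Subgroup ↥S.permGroup) → a * b = b * a) :
    ∃ x y : X, x ≠ y ∧ S.σ x = S.σ y :=
  statement5' S q hq hdvd Q hQn hQab
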